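/- Let P be a 0-1 matrix with k rows that avoids the 2 × 2 all-ones pattern, the pattern [[1,0,1],[0,1,1]], and its reflection [[0,1,1],[1,0,1]] over a horizontal line, and suppose no row of P is all zeroes. If P' is obtained from P by changing the leftmost 1 of each row to 0, then every column of P' contains at most one 1. -/
import Mathlib


/-- A 0-1 matrix `M` contains the pattern `P` if there are strictly increasing
row and column maps sending 1-entries of `P` to 1-entries of `M`. -/
def Contains {a b m n : ℕ} (P : Fin a → Fin b → Bool) (M : Fin m → Fin n → Bool) : Prop :=
  ∃ (f : Fin a → Fin m) (g : Fin b → Fin n), StrictMono f ∧ StrictMono g ∧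
    ∀ i j, P i j = true → M (f i) (g j) = true

/-- The number of ones of a 0-1 matrix. -/
def ones {m n : ℕ} (M : Fin m → Fin n → Bool) : ℕ :=
  (Finset.univ.filter fun p : Fin m × Fin n => M p.1 p.2 = true).card

/-- The extremal function `ex(n, P)`: the maximum number of ones in an
`n × n` 0-1 matrix avoiding `P`. -/
noncomputable def exF {a b : ℕ} (n : ℕ) (P : Fin a → Fin b → Bool) : ℕ :=
  sSup {t | ∃ M : Fin n → Fin n → Bool, ¬ Contains P M ∧ ones M = t}

/-- The `2 × 2` all-ones pattern. -/
def patR : Fin 2 → Fin 2 → Bool := fun _ _ => true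

/-- The pattern `[[1,0,1],[0,1,1]]`. -/
def patQ : Fin 2 → Fin 3 → Bool := fun i j =>
  if i = 0 then decide (j ≠ 1) else decide (j ≠ 0)

/-- The pattern `[[0,1,1],[1,0,1]]`, the reflection of `patQ` over a horizontal line. -/
def patQbar : Fin 2 → Fin 3 → Bool := fun i j =>
  if i = 0 then decide (j ≠ 0) else decide (j ≠ 1)

/-- Let `P` be a 0-1 matrix with `k` rows avoiding the `2 × 2` all-ones pattern,
`[[1,0,1],[0,1,1]]` and `[[0,1,1],[1,0,1]]`, with no all-zero row.  If `P'` is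
obtained from `P` by changing the leftmost 1 of each row to 0 (so the surviving
ones are exactly those with another 1 strictly to their left in the same row),
then every column of `P'` contains at most one 1. -/
theorem stmt_7 (k c : ℕ) (P : Fin k → Fin c → Bool)
    (hR : ¬ Contains patR P) (hQ : ¬ Contains patQ P) (hQbar : ¬ Contains patQbar P)
    (hrow : ∀ r, ∃ j, P r j = true) :
    ∀ (j : Fin c) (r s : Fin k),
      (P r j = true ∧ ∃ j' < j, P r j' = true) →
      (P s j = true ∧ ∃ j' < j, P s j' = true) → r = s := by
  have key : ∀ (j : Fin c) (r s : Fin k), r < s →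
      P r j = true → (∃ j' < j, P r j' = true) →
      P s j = true → (∃ j' < j, P s j' = true) → False := by
    rintro j r s hrs hrj ⟨j1, hj1, hrj1⟩ hsj ⟨j2, hj2, hsj2⟩
    rcases lt_trichotomy j1 j2 with h | h | h
    · apply hQ
      refine ⟨![r, s], ![j1, j2, j], ?_, ?_, ?_⟩
      · intro a b hab
        fin_cases a <;> fin_cases b <;> simp_all <;> exact absurd hab (lt_irrefl _)
      · intro a b hab
        fin_cases a <;> fin_cases b <;>
          simp_all <;> first | exact h.trans hj2 | exact absurd hab (lt_irrefl _)
      · intro i jj hp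
        fin_cases i <;> fin_cases jj <;> simp_all [patQ]
    · subst h
      apply hR
      refine ⟨![r, s], ![j1, j], ?_, ?_, ?_⟩
      · intro a b hab
        fin_cases a <;> fin_cases b <;> simp_all <;> exact absurd hab (lt_irrefl _)
      · intro a b hab
        fin_cases a <;> fin_cases b <;> simp_all <;> exact absurd hab (lt_irrefl _)
      · intro i jj hp
        fin_cases i <;> fin_cases jj <;> simp_all [patR]
    · apply hQbar
      refine ⟨![r, s], ![j2, j1, j], ?_, ?_, ?_⟩
      · intro a b hab
        fin_cases a <;> fin_cases b <;> simp_all <;> exact absurd hab (lt_irrefl _)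
      · intro a b hab
        fin_cases a <;> fin_cases b <;>
          simp_all <;> first | exact h.trans hj1 | exact absurd hab (lt_irrefl _)
      · intro i jj hp
        fin_cases i <;> fin_cases jj <;> simp_all [patQbar]
  intro j r s ⟨hrj, hr'⟩ ⟨hsj, hs'⟩
  by_contra hne
  rcases lt_or_gt_of_ne hne with h | h
  · exact key j r s h hrj hr' hsj hs'
  · exact key j s r h hsj hs' hrj hr'
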